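/- (In-sample soft policy improvement) Let π be a policy with π ⪯ β and let q̃^π : S × A → ℝ satisfy q̃^π = T^π q̃^π. Define the improved policy π'(a|s) = exp(q̃^π(s,a)/τ) / Σ_{a' ∈ supp β(·|s)} exp(q̃^π(s,a')/τ) for a ∈ supp β(·|s) and π'(a|s) = 0 otherwise, and let q̃^{π'} satisfy q̃^{π'} = T^{π'} q̃^{π'}. Then π' ⪯ β and q̃^{π'}(s,a) ≥ q̃^π(s,a) for all (s,a) ∈ S × A. -/

import Mathlib

open Finset

/-- The on-policy entropy-regularized Bellman operator
`(T^π q)(s,a) = r(s,a) + γ ∑_{s'} P(s,a)(s') ∑_{a' ∈ supp π(·|s')} π(a'|s')(q(s',a') − τ log π(a'|s'))`. -/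
noncomputable def Ton {S A : Type*} [Fintype S] [Fintype A]
    (r : S → A → ℝ) (γ τ : ℝ) (P : S → A → S → ℝ) (π : S → A → ℝ)
    (q : S → A → ℝ) : S → A → ℝ := fun s a =>
  r s a + γ * ∑ s', P s a s' *
    (∑ a' ∈ Finset.univ.filter (fun a' => 0 < π s' a'),
      π s' a' * (q s' a' - τ * Real.log (π s' a')))

lemma gibbs_aux {A : Type*} [Fintype A] (τ : ℝ) (hτ : 0 < τ) (x : A → ℝ)
    (w : A → ℝ) (hw0 : ∀ a, 0 ≤ w a) (hw1 : ∑ a, w a = 1)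
    (F : Finset A) (hsubF : ∀ a, 0 < w a → a ∈ F) :
    ∑ a ∈ univ.filter (fun a => 0 < w a), w a * (x a - τ * Real.log (w a))
      ≤ τ * Real.log (∑ a ∈ F, Real.exp (x a / τ)) := by
  set Z : ℝ := ∑ a ∈ F, Real.exp (x a / τ) with hZ
  have hex : ∃ a, 0 < w a := by
    by_contra h
    push_neg at h
    have : (∑ a, w a) ≤ 0 := Finset.sum_nonpos (fun a _ => h a)
    rw [hw1] at this; linarith
  obtain ⟨a₀, ha₀⟩ := hex
  have hZpos : 0 < Z :=
    Finset.sum_pos' (fun a _ => (Real.exp_pos _).le) ⟨a₀, hsubF a₀ ha₀, Real.exp_pos _⟩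
  have hwsum : ∑ a ∈ univ.filter (fun a => 0 < w a), w a = 1 := by
    rw [← hw1]
    exact Finset.sum_filter_of_ne (fun a _ h => lt_of_le_of_ne (hw0 a) (Ne.symm h))
  have key : ∀ a ∈ univ.filter (fun a => 0 < w a),
      w a * (x a - τ * Real.log (w a))
        ≤ τ * (Real.exp (x a / τ) / Z - w a) + w a * (τ * Real.log Z) := by
    intro a ha
    rw [mem_filter] at ha
    have hwa := ha.2
    have hp : 0 < Real.exp (x a / τ) / Z := div_pos (Real.exp_pos _) hZpos
    have hlog : Real.log ((Real.exp (x a / τ) / Z) / w a) ≤ (Real.exp (x a / τ) / Z) / w a - 1 :=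
      Real.log_le_sub_one_of_pos (div_pos hp hwa)
    have hlogeq : Real.log ((Real.exp (x a / τ) / Z) / w a)
        = x a / τ - Real.log Z - Real.log (w a) := by
      rw [Real.log_div (ne_of_gt hp) (ne_of_gt hwa),
        Real.log_div (Real.exp_ne_zero _) (ne_of_gt hZpos), Real.log_exp]
    have heq : w a * (x a - τ * Real.log (w a))
        = τ * (w a * Real.log ((Real.exp (x a / τ) / Z) / w a)) + w a * (τ * Real.log Z) := by
      rw [hlogeq]
      field_simp
      ring
    rw [heq]
    have h1 : w a * Real.log ((Real.exp (x a / τ) / Z) / w a)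
        ≤ w a * ((Real.exp (x a / τ) / Z) / w a - 1) := mul_le_mul_of_nonneg_left hlog hwa.le
    have h2 : w a * ((Real.exp (x a / τ) / Z) / w a - 1) = Real.exp (x a / τ) / Z - w a := by
      rw [mul_sub, mul_one, mul_comm, div_mul_cancel₀ _ (ne_of_gt hwa)]
    have h3 := mul_le_mul_of_nonneg_left (h1.trans h2.le) hτ.le
    linarith
  calc ∑ a ∈ univ.filter (fun a => 0 < w a), w a * (x a - τ * Real.log (w a))
      ≤ ∑ a ∈ univ.filter (fun a => 0 < w a),
          (τ * (Real.exp (x a / τ) / Z - w a) + w a * (τ * Real.log Z)) :=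
        Finset.sum_le_sum key
    _ = τ * ((∑ a ∈ univ.filter (fun a => 0 < w a), Real.exp (x a / τ) / Z) - 1)
        + τ * Real.log Z := by
        rw [Finset.sum_add_distrib, ← Finset.sum_mul, hwsum, ← Finset.mul_sum,
          Finset.sum_sub_distrib, hwsum]
        ring
    _ ≤ τ * (1 - 1) + τ * Real.log Z := by
        have hsub1 : (∑ a ∈ univ.filter (fun a => 0 < w a), Real.exp (x a / τ) / Z)
            ≤ ∑ a ∈ F, Real.exp (x a / τ) / Z := by
          apply Finset.sum_le_sum_of_subset_of_nonneg
          · intro a ha; exact hsubF a ((mem_filter.mp ha).2)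
          · intro a _ _; exact (div_pos (Real.exp_pos _) hZpos).le
        have hsum1 : (∑ a ∈ F, Real.exp (x a / τ) / Z) = 1 := by
          rw [← Finset.sum_div, div_self (ne_of_gt hZpos)]
        have := hsub1.trans hsum1.le
        nlinarith
    _ = τ * Real.log Z := by ring

/-- In-sample soft policy improvement: for a policy `π ⪯ β` with entropy-regularized value
`q̃^π = T^π q̃^π`, the in-sample softmax greedy policy `π'` with respect to `q̃^π` satisfies
`π' ⪯ β`, and its entropy-regularized value `q̃^{π'} = T^{π'} q̃^{π'}` dominates `q̃^π`. -/
theorem insample_soft_policy_improvement {S A : Type*}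
    [Fintype S] [Fintype A] [Nonempty S] [Nonempty A]
    (r : S → A → ℝ) (γ : ℝ) (hγ0 : 0 ≤ γ) (hγ1 : γ < 1)
    (P : S → A → S → ℝ) (hP0 : ∀ s a s', 0 ≤ P s a s') (hP1 : ∀ s a, (∑ s', P s a s') = 1)
    (τ : ℝ) (hτ : 0 < τ)
    (β : S → A → ℝ) (hβ0 : ∀ s a, 0 ≤ β s a) (hβ1 : ∀ s, (∑ a, β s a) = 1)
    (π : S → A → ℝ) (hπ0 : ∀ s a, 0 ≤ π s a) (hπ1 : ∀ s, (∑ a, π s a) = 1)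
    (hsub : ∀ s a, 0 < π s a → 0 < β s a)
    (qpi : S → A → ℝ) (hqpi : qpi = Ton r γ τ P π qpi) :
    let pi' : S → A → ℝ := fun s a =>
      if 0 < β s a then
        Real.exp (qpi s a / τ) /
          ∑ a' ∈ Finset.univ.filter (fun a' => 0 < β s a'), Real.exp (qpi s a' / τ)
      else 0
    (∀ s a, 0 < pi' s a → 0 < β s a) ∧
    (∀ qpi' : S → A → ℝ, qpi' = Ton r γ τ P pi' qpi' →
      ∀ s a, qpi s a ≤ qpi' s a) := by
  intro pi'
  have hpi'def : pi' = fun s a =>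
      if 0 < β s a then
        Real.exp (qpi s a / τ) /
          ∑ a' ∈ Finset.univ.filter (fun a' => 0 < β s a'), Real.exp (qpi s a' / τ)
      else 0 := rfl
  set Z : S → ℝ := fun s => ∑ a' ∈ Finset.univ.filter (fun a' => 0 < β s a'),
      Real.exp (qpi s a' / τ) with hZdef
  have hZpos : ∀ s, 0 < Z s := by
    intro s
    have hex : ∃ a, 0 < β s a := by
      by_contra h
      push_neg at h
      have : (∑ a, β s a) ≤ 0 := Finset.sum_nonpos (fun a _ => h a)
      rw [hβ1 s] at this; linarith
    obtain ⟨a₀, ha₀⟩ := hex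
    exact Finset.sum_pos' (fun a _ => (Real.exp_pos _).le)
      ⟨a₀, mem_filter.mpr ⟨mem_univ _, ha₀⟩, Real.exp_pos _⟩
  have hsupp : ∀ s a, 0 < pi' s a ↔ 0 < β s a := by
    intro s a
    rw [hpi'def]
    simp only
    constructor
    · intro h
      by_contra hβ
      rw [if_neg hβ] at h
      exact lt_irrefl 0 h
    · intro h
      rw [if_pos h]
      exact div_pos (Real.exp_pos _) (hZpos s)
  have hfilt : ∀ s, univ.filter (fun a => 0 < pi' s a) = univ.filter (fun a => 0 < β s a) := by
    intro s
    ext a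
    simp only [mem_filter, mem_univ, true_and]
    exact hsupp s a
  have hval : ∀ s a, 0 < β s a → pi' s a = Real.exp (qpi s a / τ) / Z s := by
    intro s a h
    rw [hpi'def]
    simp only [if_pos h]
    rfl
  have hsum1 : ∀ s, ∑ a ∈ univ.filter (fun a => 0 < pi' s a), pi' s a = 1 := by
    intro s
    rw [hfilt s]
    rw [Finset.sum_congr rfl (fun a ha => hval s a ((mem_filter.mp ha).2))]
    rw [← Finset.sum_div, div_self (ne_of_gt (hZpos s))]
  -- value of the softmax policy
  have hVeq : ∀ s, ∑ a ∈ univ.filter (fun a => 0 < pi' s a),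
      pi' s a * (qpi s a - τ * Real.log (pi' s a)) = τ * Real.log (Z s) := by
    intro s
    have hterm : ∀ a ∈ univ.filter (fun a => 0 < pi' s a),
        pi' s a * (qpi s a - τ * Real.log (pi' s a)) = pi' s a * (τ * Real.log (Z s)) := by
      intro a ha
      have hβa : 0 < β s a := (hsupp s a).mp ((mem_filter.mp ha).2)
      have hv := hval s a hβa
      rw [hv, Real.log_div (Real.exp_ne_zero _) (ne_of_gt (hZpos s)), Real.log_exp]
      have : qpi s a - τ * (qpi s a / τ - Real.log (Z s)) = τ * Real.log (Z s) := by
        field_simp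
        ring
      rw [this]
    rw [Finset.sum_congr rfl hterm, ← Finset.sum_mul, hsum1 s, one_mul]
  -- Gibbs inequality for π
  have hVle : ∀ s, ∑ a ∈ univ.filter (fun a => 0 < π s a),
      π s a * (qpi s a - τ * Real.log (π s a)) ≤ τ * Real.log (Z s) := by
    intro s
    exact gibbs_aux τ hτ (qpi s) (π s) (hπ0 s) (hπ1 s) _
      (fun a h => mem_filter.mpr ⟨mem_univ _, hsub s a h⟩)
  -- step: qpi ≤ T^{π'} qpi
  have hstep : ∀ s a, qpi s a ≤ Ton r γ τ P pi' qpi s a := by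
    intro s a
    conv_lhs => rw [hqpi]
    simp only [Ton]
    apply add_le_add_right
    apply mul_le_mul_of_nonneg_left _ hγ0
    apply Finset.sum_le_sum
    intro s' _
    apply mul_le_mul_of_nonneg_left _ (hP0 s a s')
    calc ∑ a' ∈ univ.filter (fun a' => 0 < π s' a'),
          π s' a' * (qpi s' a' - τ * Real.log (π s' a'))
        ≤ τ * Real.log (Z s') := hVle s'
      _ = ∑ a' ∈ univ.filter (fun a' => 0 < pi' s' a'),
          pi' s' a' * (qpi s' a' - τ * Real.log (pi' s' a')) := (hVeq s').symm
  refine ⟨fun s a h => (hsupp s a).mp h, ?_⟩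
  intro qpi' hqpi'
  -- difference formula
  have hdiff : ∀ s a, Ton r γ τ P pi' qpi' s a - Ton r γ τ P pi' qpi s a
      = γ * ∑ s', P s a s' * ∑ a' ∈ univ.filter (fun a' => 0 < pi' s' a'),
          pi' s' a' * (qpi' s' a' - qpi s' a') := by
    intro s a
    simp only [Ton]
    have hS : (∑ s', P s a s' * ∑ a' ∈ univ.filter (fun a' => 0 < pi' s' a'),
          pi' s' a' * (qpi' s' a' - qpi s' a'))
        = (∑ s', P s a s' * ∑ a' ∈ univ.filter (fun a' => 0 < pi' s' a'),
            pi' s' a' * (qpi' s' a' - τ * Real.log (pi' s' a')))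
          - (∑ s', P s a s' * ∑ a' ∈ univ.filter (fun a' => 0 < pi' s' a'),
            pi' s' a' * (qpi s' a' - τ * Real.log (pi' s' a'))) := by
      rw [← Finset.sum_sub_distrib]
      refine Finset.sum_congr rfl fun s' _ => ?_
      rw [← mul_sub, ← Finset.sum_sub_distrib]
      congr 1
      exact Finset.sum_congr rfl fun a' _ => by ring
    rw [hS]
    ring
  -- minimum of the difference
  obtain ⟨p₀, _, hmin⟩ := Finset.exists_min_image (univ : Finset (S × A))
    (fun p => qpi' p.1 p.2 - qpi p.1 p.2) univ_nonempty
  set m : ℝ := qpi' p₀.1 p₀.2 - qpi p₀.1 p₀.2 with hmdef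
  have hlow : ∀ s a, m ≤ qpi' s a - qpi s a := fun s a => hmin (s, a) (mem_univ _)
  have hkey : ∀ s a, γ * m ≤ qpi' s a - qpi s a := by
    intro s a
    have h1 : Ton r γ τ P pi' qpi' s a - Ton r γ τ P pi' qpi s a ≤ qpi' s a - qpi s a := by
      have := hstep s a
      rw [← hqpi'] at *
      linarith [hstep s a]
    rw [hdiff s a] at h1
    refine le_trans ?_ h1
    apply mul_le_mul_of_nonneg_left _ hγ0
    calc m = ∑ s', P s a s' * m := by rw [← Finset.sum_mul, hP1 s a, one_mul]
      _ ≤ ∑ s', P s a s' * ∑ a' ∈ univ.filter (fun a' => 0 < pi' s' a'),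
            pi' s' a' * (qpi' s' a' - qpi s' a') := by
          apply Finset.sum_le_sum
          intro s' _
          apply mul_le_mul_of_nonneg_left _ (hP0 s a s')
          calc m = ∑ a' ∈ univ.filter (fun a' => 0 < pi' s' a'), pi' s' a' * m := by
                rw [← Finset.sum_mul, hsum1 s', one_mul]
            _ ≤ ∑ a' ∈ univ.filter (fun a' => 0 < pi' s' a'),
                  pi' s' a' * (qpi' s' a' - qpi s' a') := by
                apply Finset.sum_le_sum
                intro a' ha'
                exact mul_le_mul_of_nonneg_left (hlow s' a')
                  ((mem_filter.mp ha').2).le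
  have hm0 : 0 ≤ m := by
    have := hkey p₀.1 p₀.2
    rw [← hmdef] at this
    nlinarith
  intro s a
  linarith [hlow s a]
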